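/- Let r ∈ ℕ and let 0 < c_i, ĉ_i ≤ 1 for 1 ≤ i ≤ r. For any positive constants δ and C there exists M_0 ∈ ℕ (depending only on the c_i, ĉ_i, C, δ) such that: whenever ξ_{11},...,ξ_{1r}, ξ_{21},...,ξ_{2r}, ... are i.i.d. real random variables with ξ_{11} ∈ L² and max{|𝔼ξ_{11}|, Var ξ_{11}} ≤ C, then ℙ( sup_{M ≥ M_0} Σ_{i=1}^r | (Σ_{k=1}^{⌊c_i M⌋} ξ_{ki})/(c_i M) − (Σ_{k=1}^{⌊ĉ_i M⌋} ξ_{ki})/(ĉ_i M) | ≤ δ ) ≥ 1/2. -/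

import Mathlib

set_option linter.unusedSectionVars false
set_option linter.unusedVariables false
set_option linter.unnecessarySimpa false

open MeasureTheory ProbabilityTheory Finset
open scoped ENNReal

section Aux
variable {Ω : Type} [MeasureSpace Ω] [IsProbabilityMeasure (ℙ : Measure Ω)]

lemma iIndepFun.precomp' {ι ι' : Type*} {β : Type*} [mβ : MeasurableSpace β]
    {f : ι → Ω → β} (h : iIndepFun f ℙ) {g : ι' → ι}
    (hg : Function.Injective g) :
    iIndepFun (fun j => f (g j)) ℙ := by
  rw [iIndepFun_iff_measure_inter_preimage_eq_mul] at h ⊢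
  intro S sets hsets
  classical
  set sets' : ι → Set β := fun i =>
    if h : ∃ j ∈ S, g j = i then sets h.choose else Set.univ with hsets'
  have hkey : ∀ j ∈ S, sets' (g j) = sets j := by
    intro j hj
    have hex : ∃ j' ∈ S, g j' = g j := ⟨j, hj, rfl⟩
    have : hex.choose = j := hg hex.choose_spec.2
    simp only [hsets', dif_pos hex, this]
  have hmeas' : ∀ i ∈ S.image g, MeasurableSet (sets' i) := ?_
  have := h (S.image g) (sets := sets') hmeas'
  rw [Finset.prod_image (fun a _ b _ hab => hg hab)] at this
  · calc ℙ (⋂ i ∈ S, f (g i) ⁻¹' sets i)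
        = ℙ (⋂ i ∈ image g S, f i ⁻¹' sets' i) := by
          rw [Finset.set_biInter_finset_image]
          congr 1
          exact Set.iInter₂_congr fun j hj => by rw [hkey j hj]
      _ = ∏ x ∈ S, ℙ (f (g x) ⁻¹' sets' (g x)) := this
      _ = ∏ i ∈ S, ℙ (f (g i) ⁻¹' sets i) :=
          Finset.prod_congr rfl fun j hj => by rw [hkey j hj]
  · intro i hi
    simp only [hsets']
    split
    · next hex => exact hsets _ hex.choose_spec.1
    · exact MeasurableSet.univ

variable {Ω : Type} [MeasureSpace Ω] [IsProbabilityMeasure (ℙ : Measure Ω)]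

omit [IsProbabilityMeasure (ℙ : Measure Ω)] in
lemma indep_block (X : ℕ → Ω → ℝ) (hmeas : ∀ k, Measurable (X k))
    (hindep : iIndepFun X ℙ) (m n : ℕ)
    (φ : (↥(range (m+1)) → ℝ) → ℝ) (hφ : Measurable φ) :
    IndepFun (fun ω => φ (fun j => X j ω)) (fun ω => ∑ k ∈ Ico (m+1) n, X k ω) ℙ := by
  have hdisj : Disjoint (range (m+1)) (Ico (m+1) n) := by
    simp only [Finset.disjoint_left, mem_range, mem_Ico]
    omega
  have h := hindep.indepFun_finset (range (m+1)) (Ico (m+1) n) hdisj hmeas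
  have h2 := h.comp (φ := φ) (ψ := fun w : ↥(Ico (m+1) n) → ℝ => ∑ j, w j) hφ
    (Finset.measurable_sum univ fun j _ => measurable_pi_apply j)
  have : (fun ω => ∑ k ∈ Ico (m+1) n, X k ω) =
      (fun w : ↥(Ico (m+1) n) → ℝ => ∑ j, w j) ∘ (fun a (i : ↥(Ico (m+1) n)) => X i a) := by
    funext ω
    simp only [Function.comp_apply]
    exact (Finset.sum_coe_sort (Ico (m+1) n) fun k => X k ω).symm
  rw [this]
  exact h2

lemma kolmogorov_ineq (X : ℕ → Ω → ℝ) (hmeas : ∀ k, Measurable (X k))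
    (hindep : iIndepFun X ℙ)
    (hL2 : ∀ k, MemLp (X k) 2 ℙ) (hmean : ∀ k, ∫ ω, X k ω ∂ℙ = 0)
    (n : ℕ) {ε : ℝ} (hε : 0 < ε) :
    ℙ {ω | ∃ m < n, ε ≤ |∑ k ∈ range (m+1), X k ω|} ≤
      ENNReal.ofReal ((∑ k ∈ range n, variance (X k) ℙ) / ε^2) := by
  classical
  set S : ℕ → Ω → ℝ := fun l ω => ∑ k ∈ range l, X k ω with hS
  have hSmeas : ∀ l, Measurable (S l) :=
    fun l => Finset.measurable_sum _ fun k _ => hmeas k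
  have hSL2 : ∀ l, MemLp (S l) 2 ℙ :=
    fun l => memLp_finset_sum _ fun k _ => hL2 k
  have hSmean : ∀ l, ∫ ω, S l ω ∂ℙ = 0 := by
    intro l
    rw [hS]
    rw [integral_finset_sum _ fun k _ => (hL2 k).integrable one_le_two]
    simp [hmean]
  set A : ℕ → Set Ω := fun m => {ω | ε ≤ |S (m+1) ω| ∧ ∀ l < m, |S (l+1) ω| < ε} with hA
  have hA_meas : ∀ m, MeasurableSet (A m) := by
    intro m
    have h1 : MeasurableSet {ω | ε ≤ |S (m+1) ω|} :=
      measurableSet_le measurable_const (hSmeas (m+1)).abs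
    have h2 : ∀ l, MeasurableSet {ω | |S (l+1) ω| < ε} :=
      fun l => measurableSet_lt (hSmeas (l+1)).abs measurable_const
    have : A m = {ω | ε ≤ |S (m+1) ω|} ∩ ⋂ l, ⋂ (_ : l < m), {ω | |S (l+1) ω| < ε} := by
      ext ω; simp [hA, Set.mem_iInter]
    rw [this]
    exact h1.inter (MeasurableSet.iInter fun l => MeasurableSet.iInter fun _ => h2 l)
  have hdisj2 : ∀ a b : ℕ, a < b → Disjoint (A a) (A b) := by
    intro a b h
    rw [Set.disjoint_left]
    rintro ω ⟨h1, _⟩ ⟨_, h4⟩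
    exact absurd h1 (not_le.2 (h4 a h))
  have hA_disj : Set.Pairwise ↑(range n) (Function.onFun Disjoint A) := by
    intro a _ b _ hab
    rcases lt_or_gt_of_ne hab with h | h
    · exact hdisj2 a b h
    · exact (hdisj2 b a h).symm
  -- key per-m estimate
  have key : ∀ m < n, ε^2 * (ℙ (A m)).toReal ≤ ∫ ω in A m, (S n ω)^2 ∂ℙ := by
    intro m hm
    set Z : Ω → ℝ := fun ω => ∑ k ∈ Ico (m+1) n, X k ω with hZ
    have hZmeas : Measurable Z := Finset.measurable_sum _ fun k _ => hmeas k
    have hZL2 : MemLp Z 2 ℙ := memLp_finset_sum _ fun k _ => hL2 k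
    have hZmean : ∫ ω, Z ω ∂ℙ = 0 := by
      rw [hZ, integral_finset_sum _ fun k _ => (hL2 k).integrable one_le_two]
      simp [hmean]
    have hSnZ : ∀ ω, S n ω = S (m+1) ω + Z ω := by
      intro ω
      rw [hS, hZ]
      simp only
      rw [← Finset.sum_range_add_sum_Ico _ (by omega : m+1 ≤ n)]
    -- σ functions on the product space
    set σ : ℕ → (↥(range (m+1)) → ℝ) → ℝ :=
      fun l v => ∑ j : ↥(range (m+1)), if (j : ℕ) < l + 1 then v j else 0 with hσ
    have hσmeas : ∀ l, Measurable (σ l) := by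
      intro l
      apply Finset.measurable_sum
      intro j _
      by_cases hj : (j : ℕ) < l + 1
      · simp only [hj, if_true]
        exact measurable_pi_apply j
      · simp only [hj, if_false]
        exact measurable_const
    have hσS : ∀ l ≤ m, ∀ ω, σ l (fun j => X j ω) = S (l+1) ω := by
      intro l hl ω
      show (∑ j : ↥(range (m+1)), if (j : ℕ) < l + 1 then X (j : ℕ) ω else 0)
        = ∑ k ∈ range (l+1), X k ω
      rw [Finset.sum_coe_sort (range (m+1)) (fun k => if k < l + 1 then X k ω else 0)]
      rw [← Finset.sum_filter]
      congr 1
      ext k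
      simp only [mem_filter, mem_range]
      omega
    -- the indicator function as a composition
    set D : Set (↥(range (m+1)) → ℝ) :=
      {v | ε ≤ |σ m v| ∧ ∀ l < m, |σ l v| < ε} with hD
    have hD_meas : MeasurableSet D := by
      have h1 : MeasurableSet {v : ↥(range (m+1)) → ℝ | ε ≤ |σ m v|} :=
        measurableSet_le measurable_const (hσmeas m).abs
      have h2 : ∀ l, MeasurableSet {v : ↥(range (m+1)) → ℝ | |σ l v| < ε} :=
        fun l => measurableSet_lt (hσmeas l).abs measurable_const
      have : D = {v | ε ≤ |σ m v|} ∩ ⋂ l, ⋂ (_ : l < m), {v | |σ l v| < ε} := by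
        ext v; simp [hD, Set.mem_iInter]
      rw [this]
      exact h1.inter (MeasurableSet.iInter fun l => MeasurableSet.iInter fun _ => h2 l)
    set φ : (↥(range (m+1)) → ℝ) → ℝ := D.indicator (σ m) with hφdef
    have hφmeas : Measurable φ := (hσmeas m).indicator hD_meas
    have hφeq : ∀ ω, φ (fun j => X j ω) = (A m).indicator (S (m+1)) ω := by
      intro ω
      rw [hφdef]
      have hmem : (fun j : ↥(range (m+1)) => X (j : ℕ) ω) ∈ D ↔ ω ∈ A m := by
        simp only [hD, hA, Set.mem_setOf_eq]
        constructor
        · rintro ⟨h1, h2⟩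
          exact ⟨by rwa [hσS m le_rfl ω] at h1,
            fun l hl => by have := h2 l hl; rwa [hσS l (le_of_lt hl) ω] at this⟩
        · rintro ⟨h1, h2⟩
          exact ⟨by rwa [hσS m le_rfl ω], fun l hl => by rw [hσS l (le_of_lt hl) ω]; exact h2 l hl⟩
      by_cases hω : ω ∈ A m
      · rw [Set.indicator_of_mem (hmem.2 hω), Set.indicator_of_mem hω, hσS m le_rfl ω]
      · rw [Set.indicator_of_notMem (fun hc => hω (hmem.1 hc)),
          Set.indicator_of_notMem hω]
    -- independence facts
    have hindep1 : IndepFun ((A m).indicator (S (m+1))) Z ℙ := by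
      have := indep_block X hmeas hindep m n φ hφmeas
      have heq : (fun ω => φ (fun j => X j ω)) = (A m).indicator (S (m+1)) := funext hφeq
      rwa [heq] at this
    have hindep2 : IndepFun (S (m+1)) Z ℙ := by
      have := indep_block X hmeas hindep m n (σ m) (hσmeas m)
      have heq : (fun ω => σ m (fun j => X j ω)) = S (m+1) := funext (hσS m le_rfl)
      rwa [heq] at this
    have hint1 : Integrable ((A m).indicator (S (m+1))) ℙ :=
      ((hSL2 (m+1)).integrable one_le_two).indicator (hA_meas m)
    have hintZ : Integrable Z ℙ := hZL2.integrable one_le_two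
    have hcross0 : ∫ ω, (A m).indicator (S (m+1)) ω * Z ω ∂ℙ = 0 := by
      show ∫ ω, ((A m).indicator (S (m+1)) * Z) ω ∂ℙ = 0
      rw [hindep1.integral_mul_eq_mul_integral hint1.aestronglyMeasurable hintZ.aestronglyMeasurable, hZmean, mul_zero]
    have hcross : ∫ ω in A m, S (m+1) ω * Z ω ∂ℙ = 0 := by
      rw [← integral_indicator (hA_meas m)]
      rw [← hcross0]
      congr 1
      funext ω
      by_cases hω : ω ∈ A m
      · simp [Set.indicator_of_mem hω]
      · simp [Set.indicator_of_notMem hω]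
    -- integrability facts
    have hint_sq_n : Integrable (fun ω => (S n ω)^2) ℙ := (hSL2 n).integrable_sq
    have hint_sq_m : Integrable (fun ω => (S (m+1) ω)^2) ℙ := (hSL2 (m+1)).integrable_sq
    have hint_cross : Integrable (fun ω => S (m+1) ω * Z ω) ℙ :=
      hindep2.integrable_mul ((hSL2 (m+1)).integrable one_le_two) hintZ
    -- chain of inequalities
    have step1 : ε^2 * (ℙ (A m)).toReal ≤ ∫ ω in A m, (S (m+1) ω)^2 ∂ℙ := by
      have := setIntegral_const (μ := ℙ) (s := A m) (ε^2)
      rw [smul_eq_mul, mul_comm] at this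
      rw [show (ℙ (A m)).toReal = Measure.real ℙ (A m) from rfl, ← this]
      apply setIntegral_mono_on (integrableOn_const (measure_ne_top _ _))
        hint_sq_m.integrableOn (hA_meas m)
      intro ω hω
      have h1 : ε ≤ |S (m+1) ω| := hω.1
      nlinarith [sq_abs (S (m+1) ω), abs_nonneg (S (m+1) ω)]
    have step2 : ∫ ω in A m, ((S (m+1) ω)^2 + 2 * (S (m+1) ω * Z ω)) ∂ℙ =
        ∫ ω in A m, (S (m+1) ω)^2 ∂ℙ := by
      rw [integral_add hint_sq_m.integrableOn (hint_cross.integrableOn.const_mul 2)]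
      rw [integral_const_mul, hcross, mul_zero, add_zero]
    have step3 : ∫ ω in A m, ((S (m+1) ω)^2 + 2 * (S (m+1) ω * Z ω)) ∂ℙ ≤
        ∫ ω in A m, (S n ω)^2 ∂ℙ := by
      apply setIntegral_mono_on
        (hint_sq_m.integrableOn.add (hint_cross.integrableOn.const_mul 2))
        hint_sq_n.integrableOn (hA_meas m)
      intro ω _
      show (S (m+1) ω)^2 + 2 * (S (m+1) ω * Z ω) ≤ (S n ω)^2
      rw [hSnZ ω]
      nlinarith [sq_nonneg (Z ω)]
    calc ε^2 * (ℙ (A m)).toReal ≤ ∫ ω in A m, (S (m+1) ω)^2 ∂ℙ := step1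
      _ = ∫ ω in A m, ((S (m+1) ω)^2 + 2 * (S (m+1) ω * Z ω)) ∂ℙ := step2.symm
      _ ≤ ∫ ω in A m, (S n ω)^2 ∂ℙ := step3
  -- aggregate
  have hE : {ω | ∃ m < n, ε ≤ |S (m+1) ω|} = ⋃ m ∈ range n, A m := by
    ext ω
    simp only [Set.mem_setOf_eq, Set.mem_iUnion, mem_range]
    constructor
    · rintro ⟨m, hm, hεm⟩
      have hex : ∃ l, ε ≤ |S (l+1) ω| := ⟨m, hεm⟩
      refine ⟨Nat.find hex, lt_of_le_of_lt (Nat.find_min' hex hεm) hm,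
        Nat.find_spec hex, fun l hl => ?_⟩
      exact not_le.mp (Nat.find_min hex hl)
    · rintro ⟨m, hm, h1, _⟩
      exact ⟨m, hm, h1⟩
  have hint_sq_n : Integrable (fun ω => (S n ω)^2) ℙ := (hSL2 n).integrable_sq
  have hVar : ∫ ω, (S n ω)^2 ∂ℙ = ∑ k ∈ range n, variance (X k) ℙ := by
    have hfun : S n = ∑ k ∈ range n, X k := by
      funext ω
      simp [hS]
    have h2 : variance (S n) ℙ = ∑ k ∈ range n, variance (X k) ℙ := by
      rw [hfun]
      exact IndepFun.variance_sum (fun k _ => hL2 k)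
        (fun a _ b _ hab => hindep.indepFun hab)
    have h1 : variance (S n) ℙ = ∫ ω, (S n ω)^2 ∂ℙ := by
      rw [variance_eq_sub (hSL2 n)]
      have hm0 : ∫ ω, S n ω ∂ℙ = 0 := hSmean n
      simp only [Pi.pow_apply]
      rw [hm0]
      ring
    rw [← h1, h2]
  have hchain : ε^2 * (ℙ {ω | ∃ m < n, ε ≤ |S (m+1) ω|}).toReal ≤
      ∑ k ∈ range n, variance (X k) ℙ := by
    rw [hE, measure_biUnion_finset hA_disj (fun m _ => hA_meas m)]
    rw [ENNReal.toReal_sum (fun m _ => measure_ne_top _ _), Finset.mul_sum]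
    calc ∑ m ∈ range n, ε^2 * (ℙ (A m)).toReal
        ≤ ∑ m ∈ range n, ∫ ω in A m, (S n ω)^2 ∂ℙ :=
          Finset.sum_le_sum fun m hm => key m (mem_range.mp hm)
      _ = ∫ ω in ⋃ m ∈ range n, A m, (S n ω)^2 ∂ℙ :=
          (integral_biUnion_finset (range n) (fun m _ => hA_meas m) hA_disj
            (fun m _ => hint_sq_n.integrableOn)).symm
      _ ≤ ∫ ω, (S n ω)^2 ∂ℙ :=
          setIntegral_le_integral hint_sq_n (Filter.Eventually.of_forall fun ω => sq_nonneg _)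
      _ = ∑ k ∈ range n, variance (X k) ℙ := hVar
  have hne : ℙ {ω | ∃ m < n, ε ≤ |S (m+1) ω|} ≠ ⊤ := measure_ne_top _ _
  rw [← ENNReal.ofReal_toReal hne]
  apply ENNReal.ofReal_le_ofReal
  rw [le_div_iff₀ (pow_pos hε 2)]
  linarith [hchain]

lemma dyadic_tail_bound (X : ℕ → Ω → ℝ) (hmeas : ∀ k, Measurable (X k))
    (hindep : iIndepFun X ℙ)
    (hL2 : ∀ k, MemLp (X k) 2 ℙ) (hmean : ∀ k, ∫ ω, X k ω ∂ℙ = 0)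
    {C : ℝ} (hvar : ∀ k, variance (X k) ℙ ≤ C) (hC : 0 ≤ C)
    {α : ℝ} (hα : 0 < α) (j : ℕ) :
    ℙ {ω | ∃ m < 2^(j+1), α * 2^j ≤ |∑ k ∈ range (m+1), X k ω|} ≤
      ENNReal.ofReal ((2*C/α^2) * (1/2)^j) := by
  have hε : (0:ℝ) < α * 2^j := by positivity
  refine (kolmogorov_ineq X hmeas hindep hL2 hmean (2^(j+1)) hε).trans ?_
  apply ENNReal.ofReal_le_ofReal
  have hsum : ∑ k ∈ range (2^(j+1)), variance (X k) ℙ ≤ (2^(j+1) : ℝ) * C := by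
    calc ∑ k ∈ range (2^(j+1)), variance (X k) ℙ ≤ ∑ _k ∈ range (2^(j+1)), C :=
          Finset.sum_le_sum fun k _ => hvar k
      _ = ((2^(j+1) : ℕ) : ℝ) * C := by
          rw [Finset.sum_const, card_range, nsmul_eq_mul]
      _ = (2^(j+1) : ℝ) * C := by push_cast; ring
  have h2j : (0:ℝ) < 2^j := by positivity
  calc (∑ k ∈ range (2^(j+1)), variance (X k) ℙ) / (α * 2^j)^2
      ≤ ((2^(j+1):ℝ) * C) / (α * 2^j)^2 := by gcongr
    _ = (2*C/α^2) * (1/2)^j := by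
        rw [pow_succ]
        field_simp
        rw [mul_comm ((2:ℝ) ^ j) C, mul_assoc, ← mul_pow]
        norm_num

variable {Ω : Type} [MeasureSpace Ω] [IsProbabilityMeasure (ℙ : Measure Ω)]

lemma variance_sub_const' (f : Ω → ℝ) (hf : MemLp f 2 ℙ) (c : ℝ) :
    variance (fun ω => f ω - c) ℙ = variance f ℙ := by
  have hfc : MemLp (fun ω => f ω - c) 2 ℙ := hf.sub (memLp_const c)
  have hint : Integrable f ℙ := hf.integrable one_le_two
  have hmean : ∫ ω, (f ω - c) ∂ℙ = (∫ ω, f ω ∂ℙ) - c := by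
    rw [integral_sub hint (integrable_const c), integral_const]
    simp
  have hsq : ∫ ω, (f ω - c)^2 ∂ℙ =
      (∫ ω, f ω^2 ∂ℙ) - 2*c*(∫ ω, f ω ∂ℙ) + c^2 := by
    have heq : (fun ω => (f ω - c)^2) = fun ω => f ω^2 - (2*c)*f ω + c^2 := by
      funext ω; ring
    have h1 : Integrable (fun ω => f ω^2 - 2*c*f ω) ℙ :=
      hf.integrable_sq.sub (hint.const_mul (2*c))
    have h2 : Integrable (fun ω => 2*c*f ω) ℙ := hint.const_mul (2*c)
    rw [heq, integral_add h1 (integrable_const _),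
      integral_sub hf.integrable_sq h2, integral_const_mul, integral_const]
    simp
  rw [variance_eq_sub hfc, variance_eq_sub hf]
  simp only [Pi.pow_apply]
  rw [hsq, hmean]
  ring

end Aux

section Aux2
lemma good_linear (g : ℕ → ℝ) (α : ℝ) (hα : 0 ≤ α) (j₀ : ℕ)
    (h : ∀ j, j₀ ≤ j → ∀ m < 2^(j+1), |g (m+1)| < α * 2^j) :
    ∀ n, 2^j₀ ≤ n → |g n| ≤ α * n := by
  intro n hn
  have hn1 : 1 ≤ n := le_trans (Nat.one_le_two_pow) hn
  set j := Nat.log 2 n with hj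
  have hj1 : 2^j ≤ n := Nat.pow_log_le_self 2 (by omega)
  have hj2 : n < 2^(j+1) := Nat.lt_pow_succ_log_self (by norm_num) n
  have hj0 : j₀ ≤ j := by
    by_contra h'
    push_neg at h'
    have : 2^(j+1) ≤ 2^j₀ := Nat.pow_le_pow_right (by norm_num) (by omega)
    omega
  have hb := h j hj0 (n-1) (by omega)
  have heq : n - 1 + 1 = n := by omega
  rw [heq] at hb
  refine hb.le.trans ?_
  have : ((2:ℝ))^j ≤ (n:ℝ) := by exact_mod_cast hj1
  nlinarith

variable {Ω : Type} [MeasureSpace Ω] [IsProbabilityMeasure (ℙ : Measure Ω)]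

lemma transfer_facts (f g : Ω → ℝ) (hf : Measurable f) (hg : Measurable g)
    (hmap : Measure.map f ℙ = Measure.map g ℙ) (hL2 : MemLp g 2 ℙ) :
    MemLp f 2 ℙ ∧ ∫ ω, f ω ∂ℙ = ∫ ω, g ω ∂ℙ ∧ variance f ℙ = variance g ℙ := by
  have hL2f : MemLp f 2 ℙ := by
    have h1 : MemLp id 2 (Measure.map g ℙ) :=
      (memLp_map_measure_iff aestronglyMeasurable_id hg.aemeasurable).mpr
        (show MemLp (id ∘ g) 2 ℙ from hL2)
    rw [← hmap] at h1
    exact (memLp_map_measure_iff aestronglyMeasurable_id hf.aemeasurable).mp h1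
  have hint : ∫ ω, f ω ∂ℙ = ∫ ω, g ω ∂ℙ := by
    have h1 := integral_map hf.aemeasurable (aestronglyMeasurable_id (μ := Measure.map f ℙ))
    have h2 := integral_map hg.aemeasurable (aestronglyMeasurable_id (μ := Measure.map g ℙ))
    simp only [id] at h1 h2
    rw [← h1, ← h2, hmap]
  have hsq : ∫ ω, f ω ^ 2 ∂ℙ = ∫ ω, g ω ^ 2 ∂ℙ := by
    have hc : AEStronglyMeasurable (fun x : ℝ => x ^ 2) (Measure.map f ℙ) :=
      (continuous_pow 2).aestronglyMeasurable
    have hc' : AEStronglyMeasurable (fun x : ℝ => x ^ 2) (Measure.map g ℙ) :=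
      (continuous_pow 2).aestronglyMeasurable
    have h1 := integral_map hf.aemeasurable hc
    have h2 := integral_map hg.aemeasurable hc'
    rw [← h1, ← h2, hmap]
  refine ⟨hL2f, hint, ?_⟩
  rw [variance_eq_sub hL2f, variance_eq_sub hL2, hint]
  simp only [Pi.pow_apply]
  rw [hsq]
end Aux2

lemma key_bound {mu C a b t : ℝ} (m : ℕ) (hmuC : |mu| ≤ C) (ha : 0 ≤ a) (hb : 0 < b)
    (hmb : (m:ℝ) ≤ b) (hbm : b < m+1) (ht : |t| ≤ a*m) :
    |((m:ℝ)*mu + t)/b - mu| ≤ C/b + a := by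
  have hrw : ((m:ℝ)*mu + t)/b - mu = mu*(((m:ℝ) - b)/b) + t/b := by
    field_simp
    ring
  rw [hrw]
  have hC0 : 0 ≤ C := le_trans (abs_nonneg mu) hmuC
  have h1 : |mu*(((m:ℝ)-b)/b)| ≤ C/b := by
    rw [abs_mul, abs_div, abs_of_pos hb]
    have habs : |(m:ℝ) - b| ≤ 1 := abs_le.2 ⟨by linarith, by linarith⟩
    calc |mu| * (|(m:ℝ)-b|/b) ≤ C * (1/b) := by gcongr
      _ = C/b := by ring
  have h2 : |t/b| ≤ a := by
    rw [abs_div, abs_of_pos hb, div_le_iff₀ hb]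
    calc |t| ≤ a*m := ht
      _ ≤ a*b := by nlinarith
  calc |mu*(((m:ℝ)-b)/b) + t/b| ≤ |mu*(((m:ℝ)-b)/b)| + |t/b| := abs_add_le _ _
    _ ≤ C/b + a := add_le_add h1 h2

set_option maxHeartbeats 1000000 in
/-- Tsukamoto-type uniform estimate: given `r ∈ ℕ`, `0 < c_i, c'_i ≤ 1`, `δ, C > 0`,
there is `M₀ ∈ ℕ` (depending only on the `c_i, c'_i, C, δ`) such that for any i.i.d.
family `ξ_{k,i}` (`k ∈ ℕ`, `1 ≤ i ≤ r`) of `L²` random variables with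
`max{|𝔼ξ|, Var ξ} ≤ C`, the probability that for every `M ≥ M₀`
`Σ_{i} | S_i(⌊c_i M⌋)/(c_i M) − S_i(⌊c'_i M⌋)/(c'_i M) | ≤ δ` is at least `1/2`. -/
theorem exists_M0_avg_comparison (r : ℕ) (hr : 0 < r) (c c' : Fin r → ℝ)
    (hc : ∀ i, 0 < c i ∧ c i ≤ 1) (hc' : ∀ i, 0 < c' i ∧ c' i ≤ 1)
    (δ C : ℝ) (hδ : 0 < δ) (hC : 0 < C) :
    ∃ M₀ : ℕ, 0 < M₀ ∧
      ∀ (Ω : Type) (_ : MeasureSpace Ω) (_ : IsProbabilityMeasure (ℙ : Measure Ω))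
        (ξ : ℕ × Fin r → Ω → ℝ),
        (∀ p, Measurable (ξ p)) →
        iIndepFun ξ ℙ →
        (∀ p, Measure.map (ξ p) ℙ = Measure.map (ξ (0, ⟨0, hr⟩)) ℙ) →
        MemLp (ξ (0, ⟨0, hr⟩)) 2 ℙ →
        |∫ ω, ξ (0, ⟨0, hr⟩) ω ∂ℙ| ≤ C →
        variance (ξ (0, ⟨0, hr⟩)) ℙ ≤ C →
        ENNReal.ofReal (1 / 2) ≤
          ℙ {ω | ∀ M : ℕ, M₀ ≤ M →
            ∑ i : Fin r,
              |(∑ k ∈ Finset.range ⌊c i * M⌋₊, ξ (k, i) ω) / (c i * M) -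
                (∑ k ∈ Finset.range ⌊c' i * M⌋₊, ξ (k, i) ω) / (c' i * M)| ≤ δ} := by
  classical
  have hr' : (0:ℝ) < r := Nat.cast_pos.mpr hr
  set α : ℝ := δ / (4*r) with hαdef
  have hα : 0 < α := by positivity
  have hne : (univ : Finset (Fin r)).Nonempty := ⟨⟨0, hr⟩, mem_univ _⟩
  set cm : ℝ := univ.inf' hne (fun i => min (c i) (c' i)) with hcmdef
  have hcm_pos : 0 < cm := by
    rw [hcmdef, Finset.lt_inf'_iff]
    exact fun i _ => lt_min (hc i).1 (hc' i).1
  have hcm_le : ∀ i : Fin r, cm ≤ c i :=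
    fun i => le_trans (inf'_le _ (mem_univ i)) (min_le_left _ _)
  have hcm_le' : ∀ i : Fin r, cm ≤ c' i :=
    fun i => le_trans (inf'_le _ (mem_univ i)) (min_le_right _ _)
  obtain ⟨j₀, hj₀⟩ : ∃ j₀ : ℕ, (8*r*C/α^2 : ℝ) ≤ 2^j₀ := by
    obtain ⟨N, hN⟩ := exists_nat_gt (8*(r:ℝ)*C/α^2)
    refine ⟨N, hN.le.trans ?_⟩
    exact_mod_cast (Nat.lt_two_pow_self (n := N)).le
  obtain ⟨M₁, hM₁⟩ := exists_nat_gt (max (((2:ℝ)^j₀ + 1)/cm) (8*C*r/(cm*δ)))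
  refine ⟨M₁ + 1, Nat.succ_pos _, ?_⟩
  intro Ω mΩ hprob ξ hmeas hindep hmap hL2₀ hmeanC hvarC
  set i₀ : Fin r := ⟨0, hr⟩ with hi₀
  set μ₀ : ℝ := ∫ ω, ξ (0, i₀) ω ∂ℙ with hμ₀
  have htrans := fun p => transfer_facts (ξ p) (ξ (0,i₀)) (hmeas p) (hmeas (0,i₀)) (hmap p) hL2₀
  have hL2p : ∀ p, MemLp (ξ p) 2 ℙ := fun p => (htrans p).1
  have hintp : ∀ p, ∫ ω, ξ p ω ∂ℙ = μ₀ := fun p => (htrans p).2.1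
  have hvarp : ∀ p, variance (ξ p) ℙ ≤ C := fun p => le_of_eq_of_le (htrans p).2.2 hvarC
  have hμ₀C : |μ₀| ≤ C := hmeanC
  set X : Fin r → ℕ → Ω → ℝ := fun i k ω => ξ (k, i) ω - μ₀ with hX
  have hXmeas : ∀ i k, Measurable (X i k) := fun i k => (hmeas _).sub measurable_const
  have hXL2 : ∀ i k, MemLp (X i k) 2 ℙ := fun i k => (hL2p _).sub (memLp_const μ₀)
  have hXmean : ∀ i k, ∫ ω, X i k ω ∂ℙ = 0 := by
    intro i k
    rw [hX]
    simp only
    rw [integral_sub ((hL2p _).integrable one_le_two) (integrable_const _), integral_const]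
    simp [hintp]
  have hXvar : ∀ i k, variance (X i k) ℙ ≤ C := by
    intro i k
    rw [hX]
    simp only
    rw [variance_sub_const' _ (hL2p _) μ₀]
    exact hvarp _
  have hXindep : ∀ i, iIndepFun (X i) ℙ := by
    intro i
    have hinj : Function.Injective (fun k : ℕ => (k, i)) := by
      intro a b h
      simpa using h
    have h1 := iIndepFun.precomp' hindep hinj
    exact h1.comp (fun _ x => x - μ₀) (fun _ => measurable_id.sub measurable_const)
  set T : Fin r → ℕ → Ω → ℝ := fun i n ω => ∑ k ∈ range n, X i k ω with hT
  set B : Fin r → ℕ → Set Ω := fun i j => {ω | ∃ m < 2^(j+1), α * 2^j ≤ |T i (m+1) ω|} with hB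
  have hBle : ∀ i j, ℙ (B i j) ≤ ENNReal.ofReal ((2*C/α^2) * (1/2)^j) := fun i j =>
    dyadic_tail_bound (X i) (hXmeas i) (hXindep i) (hXL2 i) (hXmean i) (hXvar i) hC.le hα j
  set Bad : Set Ω := ⋃ j : ℕ, ⋃ i : Fin r, B i (j₀ + j) with hBadDef
  have hsummable : Summable (fun j : ℕ => (r:ℝ) * ((2*C/α^2) * (1/2)^(j₀+j))) := by
    have heq : (fun j : ℕ => (r:ℝ) * ((2*C/α^2) * (1/2)^(j₀+j))) =
        fun j : ℕ => ((r:ℝ) * (2*C/α^2) * (1/2)^j₀) * (1/2)^j := by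
      funext j
      rw [pow_add]
      ring
    rw [heq]
    exact (summable_geometric_of_lt_one (by norm_num) (by norm_num)).mul_left _
  have hBad : ℙ Bad ≤ ENNReal.ofReal (1/2) := by
    calc ℙ Bad ≤ ∑' j : ℕ, ℙ (⋃ i : Fin r, B i (j₀+j)) := measure_iUnion_le _
      _ ≤ ∑' j : ℕ, ENNReal.ofReal ((r:ℝ) * ((2*C/α^2) * (1/2)^(j₀+j))) := by
          apply ENNReal.tsum_le_tsum
          intro j
          calc ℙ (⋃ i : Fin r, B i (j₀+j)) ≤ ∑' i : Fin r, ℙ (B i (j₀+j)) :=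
                measure_iUnion_le _
            _ = ∑ i : Fin r, ℙ (B i (j₀+j)) := tsum_fintype _
            _ ≤ ∑ _i : Fin r, ENNReal.ofReal ((2*C/α^2) * (1/2)^(j₀+j)) :=
                Finset.sum_le_sum fun i _ => hBle i _
            _ = (r : ℝ≥0∞) * ENNReal.ofReal ((2*C/α^2) * (1/2)^(j₀+j)) := by
                rw [Finset.sum_const, card_univ, Fintype.card_fin, nsmul_eq_mul]
            _ = ENNReal.ofReal ((r:ℝ) * ((2*C/α^2) * (1/2)^(j₀+j))) := by
                rw [← ENNReal.ofReal_natCast r,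
                  ← ENNReal.ofReal_mul (Nat.cast_nonneg r)]
      _ = ENNReal.ofReal (∑' j : ℕ, (r:ℝ) * ((2*C/α^2) * (1/2)^(j₀+j))) :=
          (ENNReal.ofReal_tsum_of_nonneg (fun j => by positivity) hsummable).symm
      _ ≤ ENNReal.ofReal (1/2) := by
          apply ENNReal.ofReal_le_ofReal
          have heq : (fun j : ℕ => (r:ℝ) * ((2*C/α^2) * (1/2)^(j₀+j))) =
              fun j : ℕ => ((r:ℝ) * (2*C/α^2) * (1/2)^j₀) * (1/2)^j := by
            funext j
            rw [pow_add]
            ring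
          rw [heq, tsum_mul_left, tsum_geometric_of_lt_one (by norm_num) (by norm_num)]
          have hinv : ((1:ℝ) - 1/2)⁻¹ = 2 := by norm_num
          rw [hinv]
          have hp2 : (2:ℝ)^j₀ * (1/2)^j₀ = 1 := by
            rw [← mul_pow]
            norm_num
          have hpow_pos : (0:ℝ) < (1/2:ℝ)^j₀ := by positivity
          calc (r:ℝ) * (2*C/α^2) * (1/2)^j₀ * 2
              = (8*r*C/α^2) * ((1/2)^j₀/2) := by ring
            _ ≤ (2^j₀ : ℝ) * ((1/2)^j₀/2) := by gcongr
            _ = ((2:ℝ)^j₀ * (1/2)^j₀)/2 := by ring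
            _ = 1/2 := by rw [hp2]
  -- conclusion via complement
  have hsub : Badᶜ ⊆ {ω | ∀ M : ℕ, M₁ + 1 ≤ M →
      ∑ i : Fin r,
        |(∑ k ∈ Finset.range ⌊c i * M⌋₊, ξ (k, i) ω) / (c i * M) -
          (∑ k ∈ Finset.range ⌊c' i * M⌋₊, ξ (k, i) ω) / (c' i * M)| ≤ δ} := by
    intro ω hω
    have hnot : ∀ j' : ℕ, ∀ i : Fin r, ω ∉ B i (j₀ + j') := by
      intro j' i hmem
      exact hω (Set.mem_iUnion.mpr ⟨j', Set.mem_iUnion.mpr ⟨i, hmem⟩⟩)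
    have hg : ∀ i : Fin r, ∀ n, 2^j₀ ≤ n → |T i n ω| ≤ α * n := by
      intro i
      apply good_linear (fun n => T i n ω) α hα.le j₀
      intro j hj m hm
      obtain ⟨j', rfl⟩ : ∃ j', j = j₀ + j' := ⟨j - j₀, by omega⟩
      have h1 := hnot j' i
      rw [hB] at h1
      simp only [Set.mem_setOf_eq] at h1
      push_neg at h1
      exact h1 m hm
    intro M hM
    have hMR : (max (((2:ℝ)^j₀ + 1)/cm) (8*C*r/(cm*δ))) < M := by
      have hle : (M₁:ℝ) ≤ M := by exact_mod_cast Nat.le_of_succ_le hM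
      exact hM₁.trans_le hle
    have hM1 : ((2:ℝ)^j₀ + 1) ≤ cm * M := by
      have := (max_lt_iff.mp hMR).1
      rw [div_lt_iff₀ hcm_pos] at this
      nlinarith
    have hM2 : 8*C*r < cm * δ * M := by
      have := (max_lt_iff.mp hMR).2
      rw [div_lt_iff₀ (by positivity : (0:ℝ) < cm * δ)] at this
      nlinarith
    have hMpos : (0:ℝ) < M := by
      nlinarith [pow_pos (by norm_num : (0:ℝ) < 2) j₀]
    have hper : ∀ i : Fin r,
        |(∑ k ∈ Finset.range ⌊c i * M⌋₊, ξ (k,i) ω)/(c i * M) -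
          (∑ k ∈ Finset.range ⌊c' i * M⌋₊, ξ (k,i) ω)/(c' i * M)| ≤
        2*(C/(cm*M)) + 2*α := by
      intro i
      have hdec : ∀ m : ℕ, (∑ k ∈ Finset.range m, ξ (k,i) ω) = (m:ℝ)*μ₀ + T i m ω := by
        intro m
        rw [hT]
        simp only [hX]
        rw [Finset.sum_sub_distrib, Finset.sum_const, card_range, nsmul_eq_mul]
        ring
      have hstep : ∀ a : ℝ, 0 < a → cm ≤ a →
          |(∑ k ∈ Finset.range ⌊a * M⌋₊, ξ (k,i) ω)/(a * M) - μ₀| ≤ C/(cm*M) + α := by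
        intro a ha hcma
        set n := ⌊a * M⌋₊ with hn
        have haM : 0 < a * M := mul_pos ha hMpos
        have h1 : (n:ℝ) ≤ a*M := Nat.floor_le haM.le
        have h2 : a*M < (n:ℝ)+1 := Nat.lt_floor_add_one _
        have hcmM : cm * M ≤ a * M := by nlinarith
        have hge : (2:ℝ)^j₀ ≤ a*M := by nlinarith
        have hnge : 2^j₀ ≤ n := by
          apply Nat.le_floor
          exact_mod_cast hge
        have hTn := hg i n hnge
        rw [hdec n]
        have := key_bound (mu := μ₀) (C := C) (a := α) (b := a*(M:ℝ)) n hμ₀C hα.le haM h1 h2 hTn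
        refine this.trans ?_
        have : C/(a*M) ≤ C/(cm*M) := by
          apply div_le_div_of_nonneg_left hC.le (by positivity) hcmM
        linarith
      have hA := hstep (c i) (hc i).1 (hcm_le i)
      have hB' := hstep (c' i) (hc' i).1 (hcm_le' i)
      set A1 := (∑ k ∈ Finset.range ⌊c i * M⌋₊, ξ (k,i) ω)/(c i * M)
      set A2 := (∑ k ∈ Finset.range ⌊c' i * M⌋₊, ξ (k,i) ω)/(c' i * M)
      calc |A1 - A2| ≤ |A1 - μ₀| + |μ₀ - A2| := abs_sub_le _ _ _
        _ = |A1 - μ₀| + |A2 - μ₀| := by rw [abs_sub_comm μ₀ A2]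
        _ ≤ (C/(cm*M) + α) + (C/(cm*M) + α) := add_le_add hA hB'
        _ = 2*(C/(cm*M)) + 2*α := by ring
    calc ∑ i : Fin r,
          |(∑ k ∈ Finset.range ⌊c i * M⌋₊, ξ (k,i) ω)/(c i * M) -
            (∑ k ∈ Finset.range ⌊c' i * M⌋₊, ξ (k,i) ω)/(c' i * M)|
        ≤ ∑ _i : Fin r, (2*(C/(cm*M)) + 2*α) := Finset.sum_le_sum fun i _ => hper i
      _ = (r:ℝ) * (2*(C/(cm*M)) + 2*α) := by
          rw [Finset.sum_const, card_univ, Fintype.card_fin, nsmul_eq_mul]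
      _ ≤ δ := by
          have h2αr : (r:ℝ) * (2*α) = δ/2 := by
            rw [hαdef]
            field_simp
            ring
          have hcmM_pos : (0:ℝ) < cm * M := by positivity
          have hfrac : (r:ℝ) * (2*(C/(cm*M))) ≤ δ/2 := by
            have heq2 : (r:ℝ) * (2*(C/(cm*M))) = 2*C*r/(cm*M) := by ring
            rw [heq2, div_le_iff₀ hcmM_pos]
            nlinarith [hC.le, hr', hM2]
          nlinarith
  have h1 : (1:ℝ≥0∞) ≤ ℙ Bad + ℙ Badᶜ := by
    calc (1:ℝ≥0∞) = ℙ (Set.univ : Set Ω) := (measure_univ).symm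
      _ = ℙ (Bad ∪ Badᶜ) := by rw [Set.union_compl_self]
      _ ≤ ℙ Bad + ℙ Badᶜ := measure_union_le _ _
  have h12 : ENNReal.ofReal (1/2) + ENNReal.ofReal (1/2) = 1 := by
    rw [← ENNReal.ofReal_add (by norm_num) (by norm_num)]
    norm_num
  have hhalf : ENNReal.ofReal (1/2) ≤ ℙ Badᶜ := by
    have h3 : ENNReal.ofReal (1/2) + ENNReal.ofReal (1/2) ≤ ENNReal.ofReal (1/2) + ℙ Badᶜ := by
      rw [h12]
      exact h1.trans (add_le_add hBad le_rfl)
    exact (ENNReal.add_le_add_iff_left ENNReal.ofReal_ne_top).mp h3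
  exact hhalf.trans (measure_mono hsub)
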